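/- Fix n : ℕ with n ≥ 1 and a natural number k with 0 < k < n. Write d^k_{(m)} for the coface Fin m → Fin (m+1) with pivot of value k, and write d_⊤ : Fin m → Fin (m+1) for x ↦ (x : ℕ) and d_⊥ : Fin m → Fin (m+1) for x ↦ (x : ℕ) + 1. Then: (i) d^k_{(n+1)} ∘ d_⊤ = d_⊤ ∘ d^k_{(n)}, and for every c : ℕ and monotone u, v : Fin c → Fin (n+1) with d^k_{(n+1)} ∘ u = d_⊤ ∘ v there exists a unique monotone w : Fin c → Fin n with d_⊤ ∘ w = u and d^k_{(n)} ∘ w = v; (ii) d^{k+1}_{(n+1)} ∘ d_⊥ = d_⊥ ∘ d^k_{(n)}, and for every c : ℕ and monotone u, v : Fin c → Fin (n+1) with d^{k+1}_{(n+1)} ∘ u = d_⊥ ∘ v there exists a unique monotone w : Fin c → Fin n with d_⊥ ∘ w = u and d^k_{(n)} ∘ w = v. (The squares of an inner coface against each outer coface are pullbacks in the category of finite ordinals.) -/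
import Mathlib


/-- The coface map `d^k : Fin m → Fin (m+1)` with pivot of value `k`. -/
def coface {m : ℕ} (k : ℕ) (x : Fin m) : Fin (m + 1) :=
  if (x : ℕ) < k then ⟨(x : ℕ), by have := x.isLt; omega⟩
  else ⟨(x : ℕ) + 1, by have := x.isLt; omega⟩

/-- The top outer coface `d_⊤ : Fin m → Fin (m+1)`, `x ↦ x`. -/
def dTop {m : ℕ} (x : Fin m) : Fin (m + 1) :=
  ⟨(x : ℕ), by have := x.isLt; omega⟩

/-- The bottom outer coface `d_⊥ : Fin m → Fin (m+1)`, `x ↦ x + 1`. -/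
def dBot {m : ℕ} (x : Fin m) : Fin (m + 1) :=
  ⟨(x : ℕ) + 1, by have := x.isLt; omega⟩

lemma coface_val {m : ℕ} (k : ℕ) (x : Fin m) :
    ((coface k x : Fin (m+1)) : ℕ) = if (x : ℕ) < k then (x : ℕ) else (x : ℕ) + 1 := by
  unfold coface; split_ifs <;> rfl

/-- The squares of an inner coface against each outer coface are pullbacks in
the category of finite ordinals and monotone maps. -/
theorem inner_coface_outer_coface_pullbacks (n k : ℕ) (hn : 1 ≤ n)
    (hk0 : 0 < k) (hkn : k < n) :
    ((coface k : Fin (n + 1) → Fin (n + 2)) ∘ dTop =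
      dTop ∘ (coface k : Fin n → Fin (n + 1))) ∧
    (∀ (c : ℕ) (u v : Fin c → Fin (n + 1)), Monotone u → Monotone v →
      (coface k : Fin (n + 1) → Fin (n + 2)) ∘ u = dTop ∘ v →
      ∃! w : Fin c → Fin n, Monotone w ∧ dTop ∘ w = u ∧ (coface k) ∘ w = v) ∧
    ((coface (k + 1) : Fin (n + 1) → Fin (n + 2)) ∘ dBot =
      dBot ∘ (coface k : Fin n → Fin (n + 1))) ∧
    (∀ (c : ℕ) (u v : Fin c → Fin (n + 1)), Monotone u → Monotone v →
      (coface (k + 1) : Fin (n + 1) → Fin (n + 2)) ∘ u = dBot ∘ v →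
      ∃! w : Fin c → Fin n, Monotone w ∧ dBot ∘ w = u ∧ (coface k) ∘ w = v) := by
  refine ⟨?_, ?_, ?_, ?_⟩
  · funext x
    apply Fin.ext
    simp only [Function.comp_apply, coface_val, dTop, Fin.val_mk]
    try (split_ifs <;> omega)
  · intro c u v hu hv h
    have key : ∀ x : Fin c,
        (if (u x : ℕ) < k then (u x : ℕ) else (u x : ℕ) + 1) = (v x : ℕ) := by
      intro x
      have := congrFun h x
      have := congrArg Fin.val this
      simpa [coface_val, dTop] using this
    have hun : ∀ x, (u x : ℕ) < n := by
      intro x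
      have := key x
      have hvlt := (v x).isLt
      split_ifs at this <;> omega
    refine ⟨fun x => ⟨(u x : ℕ), hun x⟩, ⟨?_, ?_, ?_⟩, ?_⟩
    · intro a b hab
      exact Fin.mk_le_mk.mpr (hu hab)
    · funext x; apply Fin.ext; simp [dTop]
    · funext x
      apply Fin.ext
      have := key x
      simp only [Function.comp_apply, coface_val, Fin.val_mk]
      split_ifs at this ⊢ <;> omega
    · rintro w' ⟨-, hw1, -⟩
      funext x
      apply Fin.ext
      have := congrArg Fin.val (congrFun hw1 x)
      simpa [dTop] using this
  · funext x
    apply Fin.ext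
    simp only [Function.comp_apply, coface_val, dTop, dBot, Fin.val_mk]
    try (split_ifs <;> omega)
  · intro c u v hu hv h
    have key : ∀ x : Fin c,
        (if (u x : ℕ) < k + 1 then (u x : ℕ) else (u x : ℕ) + 1) = (v x : ℕ) + 1 := by
      intro x
      have := congrFun h x
      have := congrArg Fin.val this
      simpa [coface_val, dBot] using this
    have hun : ∀ x, (u x : ℕ) - 1 < n ∧ 1 ≤ (u x : ℕ) := by
      intro x
      have := key x
      have hvlt := (v x).isLt
      have hult := (u x).isLt
      split_ifs at this <;> omega
    refine ⟨fun x => ⟨(u x : ℕ) - 1, (hun x).1⟩, ⟨?_, ?_, ?_⟩, ?_⟩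
    · intro a b hab
      exact Fin.mk_le_mk.mpr (by have := hu hab; omega)
    · funext x
      apply Fin.ext
      have := (hun x).2
      simp only [Function.comp_apply, dBot]
      omega
    · funext x
      apply Fin.ext
      have := key x
      have h1 := (hun x).2
      simp only [Function.comp_apply, coface_val, Fin.val_mk]
      split_ifs at this ⊢ <;> omega
    · rintro w' ⟨-, hw1, -⟩
      funext x
      apply Fin.ext
      have := congrArg Fin.val (congrFun hw1 x)
      simp only [Function.comp_apply, dBot, Fin.val_mk] at this ⊢
      omega
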